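/- Let P = {x ∈ [0,1]^n : a·x = b} and x̃ ∈ {0,1}^n. If the minimum ℓ1 distance min_{x ∈ P} ‖x̃ − x‖₁ is strictly less than 1, then AltProj(x̃) differs from x̃ in at most one coordinate, i.e., ‖AltProj(x̃) − x̃‖₀ ≤ 1. -/
import Mathlib


/-- Claim 2, part 2: if the minimum ℓ1 distance from a 0/1 point `x̃` to the
subset-sum polytope is strictly less than 1, then `AltProj(x̃)` differs from
`x̃` in at most one coordinate. -/
theorem altproj_changes_at_most_one (n : ℕ) (a : Fin n → ℝ) (b : ℝ)
    (P : Set (Fin n → ℝ))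
    (hP : P = {x | (∀ i, 0 ≤ x i ∧ x i ≤ 1) ∧ ∑ i, a i * x i = b})
    (xt : Fin n → ℝ) (hxt : ∀ i, xt i = 0 ∨ xt i = 1)
    (xb : Fin n → ℝ) (hxbP : xb ∈ P)
    (hmin : ∀ x ∈ P, ∑ i, |xt i - xb i| ≤ ∑ i, |xt i - x i|)
    (hval : ∑ i, |xt i - xb i| < 1) :
    (Finset.univ.filter (fun i => ((⌊xb i + 1/2⌋ : ℤ) : ℝ) ≠ xt i)).card ≤ 1 := by
  subst hP
  obtain ⟨hbox, -⟩ := hxbP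
  -- Key: each coordinate in the filter contributes at least 1/2.
  have key : ∀ i, ((⌊xb i + 1/2⌋ : ℤ) : ℝ) ≠ xt i → (1:ℝ)/2 ≤ |xt i - xb i| := by
    intro i hi
    obtain ⟨h0, h1⟩ := hbox i
    rcases hxt i with h | h
    · -- xt i = 0 : must have xb i ≥ 1/2
      by_contra hc
      push_neg at hc
      rw [h, abs_sub_comm, sub_zero, abs_of_nonneg h0] at hc
      apply hi
      have : ⌊xb i + 1/2⌋ = 0 := by
        rw [Int.floor_eq_zero_iff]
        constructor <;> simp <;> linarith
      rw [this, h]; norm_num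
    · by_contra hc
      push_neg at hc
      rw [h, abs_of_nonneg (by linarith)] at hc
      apply hi
      have : ⌊xb i + 1/2⌋ = 1 := by
        have : (1:ℤ) ≤ ⌊xb i + 1/2⌋ := by
          rw [Int.le_floor]; push_cast; linarith
        have h2 : ⌊xb i + 1/2⌋ < 2 := by
          rw [Int.floor_lt]; push_cast; linarith
        omega
      rw [this, h]; norm_num
  by_contra hcard
  push_neg at hcard
  rw [Finset.one_lt_card_iff] at hcard
  obtain ⟨i, j, hi, hj, hij⟩ := hcard
  simp only [Finset.mem_filter, Finset.mem_univ, true_and] at hi hj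
  have hsum : |xt i - xb i| + |xt j - xb j| ≤ ∑ k, |xt k - xb k| := by
    have : ({i, j} : Finset (Fin n)) ⊆ Finset.univ := Finset.subset_univ _
    calc |xt i - xb i| + |xt j - xb j| = ∑ k ∈ ({i, j} : Finset (Fin n)), |xt k - xb k| := by
          rw [Finset.sum_pair hij]
      _ ≤ ∑ k, |xt k - xb k| :=
          Finset.sum_le_sum_of_subset_of_nonneg this (fun k _ _ => abs_nonneg _)
  have := key i hi
  have := key j hj
  linarith
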